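/- Let ∂ be an n×m matrix over a commutative ring, X = diag(x₁,…,xₙ) and Y = diag(y₁,…,y_m) diagonal matrices of indeterminates. Then det(tI + X∂Y∂ᵗ) = Σ over pairs (I,J) with |I| = |J| of t^{n-|I|}·x^I·y^J·(det ∂_{I,J})², where x^I = Π_{i∈I} x_i and y^J = Π_{j∈J} y_j. -/

import Mathlib

open Polynomial Finset

/-- The square submatrix of `B` with rows indexed by `I` and columns by `J`
(in increasing order), defined when `I.card = J.card`, and `0` otherwise. -/
noncomputable def minorDet {n m : ℕ} {R : Type*} [CommRing R]
    (B : Matrix (Fin n) (Fin m) R) (I : Finset (Fin n)) (J : Finset (Fin m)) : R :=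
  if h : I.card = J.card then
    (B.submatrix (I.orderEmbOfFin rfl) (J.orderEmbOfFin h.symm)).det
  else 0

section Aux

open Matrix Equiv

variable {R : Type*} [CommRing R]


theorem det_mul_aux' {n m : Type*} [DecidableEq n] [Fintype n] [DecidableEq m]
    {M : Matrix n m R} {N : Matrix m n R} {p : n → m} (H : ¬Function.Injective p) :
    (∑ σ : Perm n, Equiv.Perm.sign σ • ∏ x, M (σ x) (p x) * N (p x) x) = 0 := by
  obtain ⟨i, j, hpij, hij⟩ : ∃ i j, p i = p j ∧ i ≠ j := by
    rw [Function.Injective] at H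
    push_neg at H
    obtain ⟨i, j, h1, h2⟩ := H
    exact ⟨i, j, h1, h2⟩
  exact
    sum_involution (fun σ _ => σ * Equiv.swap i j)
      (fun σ _ => by
        have : (∏ x, M (σ x) (p x)) = ∏ x, M ((σ * Equiv.swap i j) x) (p x) :=
          Fintype.prod_equiv (Equiv.swap i j) _ _ (by simp [Equiv.apply_swap_eq_self hpij])
        simp [this, Equiv.Perm.sign_swap hij, -Equiv.Perm.sign_swap', prod_mul_distrib,
          Units.smul_def])
      (fun σ _ _ => (not_congr Equiv.mul_swap_eq_iff).mpr hij) (fun _ _ => mem_univ _)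
      fun σ _ => Equiv.mul_swap_involutive i j σ

theorem det_mul_expand {n : Type*} [DecidableEq n] [Fintype n] (M N : Matrix n n R) :
    det (M * N) = ∑ τ : Perm n, ∑ σ : Perm n,
      Equiv.Perm.sign σ • ∏ i, M (σ i) (τ i) * N (τ i) i :=
  calc
    det (M * N) = ∑ p : n → n, ∑ σ : Perm n,
        Equiv.Perm.sign σ • ∏ i, M (σ i) (p i) * N (p i) i := by
      simp only [det_apply, mul_apply, prod_univ_sum, smul_sum, Fintype.piFinset_univ]
      rw [Finset.sum_comm]
    _ = ∑ p ∈ univ.filter (fun p : n → n => Function.Injective p), ∑ σ : Perm n,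
        Equiv.Perm.sign σ • ∏ i, M (σ i) (p i) * N (p i) i := by
      refine (sum_subset (filter_subset _ _) fun f _ hinj ↦ det_mul_aux' ?_).symm
      simpa only [true_and, mem_filter, mem_univ] using hinj
    _ = ∑ τ : Perm n, ∑ σ : Perm n, Equiv.Perm.sign σ • ∏ i, M (σ i) (τ i) * N (τ i) i :=
      sum_bij (fun p h ↦ Equiv.ofBijective p
          (Finite.injective_iff_bijective.mp (mem_filter.1 h).2))
        (fun _ _ ↦ mem_univ _)
        (fun _ _ _ _ h ↦ by injection h)
        (fun b _ ↦ ⟨b, mem_filter.2 ⟨mem_univ _, b.injective⟩, Equiv.coe_fn_injective rfl⟩)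
        fun _ _ ↦ rfl


theorem orderEmbOfFin_congr {α : Type*} [LinearOrder α] {J J' : Finset α} (h : J = J')
    {k : ℕ} (p : J.card = k) (p' : J'.card = k) (i : Fin k) :
    J.orderEmbOfFin p i = J'.orderEmbOfFin p' i := by subst h; rfl

theorem imageCard {k m : ℕ} (f : Fin k → Fin m) (hf : Function.Injective f) :
    (univ.image f).card = k := by
  rw [card_image_of_injective _ hf, card_univ, Fintype.card_fin]

/-- The permutation relating an injective `f` to the order embedding of its image. -/
noncomputable def injPerm {k m : ℕ} (f : Fin k → Fin m) (hf : Function.Injective f) :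
    Perm (Fin k) :=
  Equiv.ofBijective
    (fun i => ((univ.image f).orderIsoOfFin (imageCard f hf)).symm
      ⟨f i, mem_image_of_mem f (mem_univ i)⟩)
    (Finite.injective_iff_bijective.mp (fun a b hab => hf
      (Subtype.mk_eq_mk.mp (((univ.image f).orderIsoOfFin (imageCard f hf)).symm.injective hab))))

theorem injPerm_spec {k m : ℕ} (f : Fin k → Fin m) (hf : Function.Injective f) (i : Fin k) :
    (univ.image f).orderEmbOfFin (imageCard f hf) (injPerm f hf i) = f i := by
  rw [← Finset.coe_orderIsoOfFin_apply]
  simp [injPerm, Equiv.ofBijective_apply]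

theorem image_orderEmbOfFin_perm {α : Type*} [LinearOrder α] [DecidableEq α] {k : ℕ}
    (J : Finset α) (hJ : J.card = k)
    (τ : Perm (Fin k)) : univ.image (fun i => J.orderEmbOfFin hJ (τ i)) = J := by
  ext a
  simp only [mem_image, mem_univ, true_and]
  constructor
  · rintro ⟨i, rfl⟩; exact J.orderEmbOfFin_mem hJ (τ i)
  · intro ha
    have : a ∈ Set.range (J.orderEmbOfFin hJ) := by
      rw [Finset.range_orderEmbOfFin]; exact_mod_cast ha
    obtain ⟨j, hj⟩ := this
    exact ⟨τ.symm j, by simpa using hj⟩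

noncomputable def cDet {k m : ℕ} (P : Matrix (Fin k) (Fin m) R) (J : Finset (Fin m)) : R :=
  if h : J.card = k then (P.submatrix id (J.orderEmbOfFin h)).det else 0

noncomputable def rDet {k m : ℕ} (Q : Matrix (Fin m) (Fin k) R) (J : Finset (Fin m)) : R :=
  if h : J.card = k then (Q.submatrix (J.orderEmbOfFin h) id).det else 0

theorem cauchyBinet {k m : ℕ} (P : Matrix (Fin k) (Fin m) R) (Q : Matrix (Fin m) (Fin k) R) :
    det (P * Q) = ∑ J ∈ univ.filter (fun J : Finset (Fin m) => J.card = k),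
      cDet P J * rDet Q J :=
  calc
    det (P * Q) = ∑ f : Fin k → Fin m, ∑ σ : Perm (Fin k),
        Equiv.Perm.sign σ • ∏ i, P (σ i) (f i) * Q (f i) i := by
      simp only [det_apply, mul_apply, prod_univ_sum, smul_sum, Fintype.piFinset_univ]
      rw [Finset.sum_comm]
    _ = ∑ f ∈ univ.filter (fun f : Fin k → Fin m => Function.Injective f), ∑ σ : Perm (Fin k),
        Equiv.Perm.sign σ • ∏ i, P (σ i) (f i) * Q (f i) i := by
      refine (sum_subset (filter_subset _ _) fun f _ hinj ↦ det_mul_aux' ?_).symm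
      simpa only [true_and, mem_filter, mem_univ] using hinj
    _ = ∑ x : {J : Finset (Fin m) // J.card = k} × Perm (Fin k), ∑ σ : Perm (Fin k),
        Equiv.Perm.sign σ • ∏ i, P (σ i) (x.1.1.orderEmbOfFin x.1.2 (x.2 i))
          * Q (x.1.1.orderEmbOfFin x.1.2 (x.2 i)) i := by
      refine Finset.sum_bij
        (fun (f : Fin k → Fin m) (hf : f ∈ univ.filter fun f => Function.Injective f) =>
          (⟨univ.image f, imageCard f (mem_filter.mp hf).2⟩,
            injPerm f (mem_filter.mp hf).2))
        (fun _ _ => mem_univ _) ?_ ?_ ?_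
      · -- injectivity
        intro f hf g hg h
        obtain ⟨h1, h2⟩ := Prod.mk.injEq .. ▸ h
        have hJ : univ.image f = univ.image g := congrArg Subtype.val h1
        funext i
        rw [← injPerm_spec f (mem_filter.mp hf).2 i, ← injPerm_spec g (mem_filter.mp hg).2 i, h2]
        exact orderEmbOfFin_congr hJ _ _ _
      · -- surjectivity
        rintro ⟨⟨J, hJ⟩, τ⟩ -
        have hinj : Function.Injective (fun i => J.orderEmbOfFin hJ (τ i)) :=
          (J.orderEmbOfFin hJ).injective.comp τ.injective
        refine ⟨fun i => J.orderEmbOfFin hJ (τ i), mem_filter.mpr ⟨mem_univ _, hinj⟩, ?_⟩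
        have hIm := image_orderEmbOfFin_perm J hJ τ
        have h2 : injPerm (fun i => J.orderEmbOfFin hJ (τ i)) hinj = τ := by
          apply Equiv.coe_fn_injective
          funext i
          refine (J.orderEmbOfFin hJ).injective ?_
          rw [← orderEmbOfFin_congr hIm (imageCard _ hinj) hJ, injPerm_spec]
        exact Prod.ext (Subtype.ext hIm) h2
      · intro f hf
        simp only [injPerm_spec]
    _ = ∑ J ∈ univ.filter (fun J : Finset (Fin m) => J.card = k), cDet P J * rDet Q J := by
      rw [Fintype.sum_prod_type]
      rw [Finset.sum_subtype (p := fun J : Finset (Fin m) => J.card = k)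
        (univ.filter fun J : Finset (Fin m) => J.card = k)
        (fun x => by simp) (fun J => cDet P J * rDet Q J)]
      refine Fintype.sum_congr _ _ fun J => ?_
      rw [cDet, rDet, dif_pos J.2, dif_pos J.2, ← det_mul,
        det_mul_expand (P.submatrix id (J.1.orderEmbOfFin J.2))
          (Q.submatrix (J.1.orderEmbOfFin J.2) id)]
      rfl

/-- Principal minor of `A` on the rows/columns of `I`. -/
noncomputable def pMinor {n : ℕ} (A : Matrix (Fin n) (Fin n) R) (I : Finset (Fin n)) : R :=
  (A.submatrix (I.orderEmbOfFin rfl) (I.orderEmbOfFin rfl)).det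

theorem det_piecewise_one {n : ℕ} (A : Matrix (Fin n) (Fin n) R) (S : Finset (Fin n)) :
    Matrix.det (Matrix.of (S.piecewise ((1 : Matrix (Fin n) (Fin n) R) : Fin n → Fin n → R)
      (A : Fin n → Fin n → R))) = pMinor A Sᶜ := by
  classical
  set E : Matrix (Fin n) (Fin n) R :=
    Matrix.of (S.piecewise ((1 : Matrix (Fin n) (Fin n) R) : Fin n → Fin n → R) A) with hE
  have h1 : E.det = (E.submatrix (Equiv.sumCompl (· ∈ S)) (Equiv.sumCompl (· ∈ S))).det :=
    (Matrix.det_submatrix_equiv_self _ E).symm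
  have h2 : E.submatrix (Equiv.sumCompl (· ∈ S)) (Equiv.sumCompl (· ∈ S)) =
      Matrix.fromBlocks 1 0
        (Matrix.of fun (i : {i // i ∉ S}) (j : {j // j ∈ S}) => A i.1 j.1)
        (Matrix.of fun (i : {i // i ∉ S}) (j : {j // j ∉ S}) => A i.1 j.1) := by
    ext i j
    rcases i with i | i <;> rcases j with j | j <;>
      simp only [Matrix.submatrix_apply, Equiv.sumCompl_apply_inl, Equiv.sumCompl_apply_inr,
        hE, Matrix.of_apply, Matrix.fromBlocks, Matrix.one_apply]
    · erw [S.piecewise_eq_of_mem _ _ i.2]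
      simp only [Matrix.one_apply, Subtype.ext_iff, Sum.elim_inl]
    · erw [S.piecewise_eq_of_mem _ _ i.2]
      simp only [Matrix.one_apply]
      rw [if_neg, Sum.elim_inl, Sum.elim_inr]
      · rfl
      · intro h
        exact j.2 (h ▸ i.2)
    · erw [S.piecewise_eq_of_notMem _ _ i.2]; rfl
    · erw [S.piecewise_eq_of_notMem _ _ i.2]; rfl
  rw [h1, h2, Matrix.det_fromBlocks_zero₁₂, Matrix.det_one, one_mul]
  rw [← Matrix.det_submatrix_equiv_self
    ((Sᶜ.orderIsoOfFin rfl).toEquiv.trans (Equiv.subtypeEquivRight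
      (fun x => Finset.mem_compl))), pMinor]
  refine congrArg Matrix.det (Matrix.ext fun i j => ?_)
  simp only [Matrix.submatrix_apply, Matrix.of_apply, Equiv.trans_apply,
    Equiv.subtypeEquivRight_apply, RelIso.coe_fn_toEquiv]
  rw [Finset.coe_orderIsoOfFin_apply, Finset.coe_orderIsoOfFin_apply]

theorem det_smul_one_add {n : ℕ} (A : Matrix (Fin n) (Fin n) R) (t : R) :
    (t • (1 : Matrix (Fin n) (Fin n) R) + A).det
      = ∑ I : Finset (Fin n), t ^ (n - I.card) * pMinor A I := by
  classical
  have h0 : (t • (1 : Matrix (Fin n) (Fin n) R) + A).det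
      = ∑ S : Finset (Fin n),
        (Matrix.detRowAlternating (S.piecewise ((t • (1 : Matrix (Fin n) (Fin n) R)) :
            Fin n → Fin n → R) (A : Fin n → Fin n → R)) : R) :=
    (Matrix.detRowAlternating :
      (Fin n → R) [⋀^Fin n]→ₗ[R] R).toMultilinearMap.map_add_univ _ _
  rw [h0]
  have h1 : ∀ S : Finset (Fin n),
      (Matrix.detRowAlternating (S.piecewise ((t • (1 : Matrix (Fin n) (Fin n) R)) :
          Fin n → Fin n → R) (A : Fin n → Fin n → R)) : R)
      = t ^ S.card * pMinor A Sᶜ := by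
    intro S
    have heq : S.piecewise ((t • (1 : Matrix (Fin n) (Fin n) R)) : Fin n → Fin n → R)
        (A : Fin n → Fin n → R)
        = S.piecewise (fun i => t • (S.piecewise ((1 : Matrix (Fin n) (Fin n) R) :
            Fin n → Fin n → R) (A : Fin n → Fin n → R)) i)
          (S.piecewise ((1 : Matrix (Fin n) (Fin n) R) : Fin n → Fin n → R)
            (A : Fin n → Fin n → R)) := by
      funext i
      by_cases hi : i ∈ S
      · simp only [S.piecewise_eq_of_mem _ _ hi]
        simp only [Finset.piecewise, if_pos hi]; rfl
      · simp only [Finset.piecewise, hi, if_false]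
    rw [heq]
    have h2 : (Matrix.detRowAlternating
        (S.piecewise (fun i => t • (S.piecewise ((1 : Matrix (Fin n) (Fin n) R) :
            Fin n → Fin n → R) (A : Fin n → Fin n → R)) i)
          (S.piecewise ((1 : Matrix (Fin n) (Fin n) R) : Fin n → Fin n → R)
            (A : Fin n → Fin n → R))) : R)
        = (∏ _i ∈ S, t) • (Matrix.detRowAlternating
            (S.piecewise ((1 : Matrix (Fin n) (Fin n) R) : Fin n → Fin n → R)
              (A : Fin n → Fin n → R)) : R) :=
      (Matrix.detRowAlternating :
        (Fin n → R) [⋀^Fin n]→ₗ[R] R).toMultilinearMap.map_piecewise_smul (fun _ => t) _ S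
    rw [h2, Finset.prod_const, smul_eq_mul]
    congr 1
    exact det_piecewise_one A S
  rw [Finset.sum_congr rfl (fun S _ => h1 S)]
  refine Fintype.sum_bijective (Compl.compl : Finset (Fin n) → Finset (Fin n)) compl_involutive.bijective _ _ fun S => ?_
  rw [Finset.card_compl, Fintype.card_fin,
    Nat.sub_sub_self (le_trans (Finset.card_le_univ S) (by simp))]

theorem prod_orderEmbOfFin {α : Type*} [LinearOrder α] {M : Type*} [CommMonoid M]
    (s : Finset α) {k : ℕ} (h : s.card = k) (f : α → M) :
    ∏ i : Fin k, f (s.orderEmbOfFin h i) = ∏ x ∈ s, f x := by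
  refine Finset.prod_bij (fun i _ => s.orderEmbOfFin h i)
    (fun i _ => s.orderEmbOfFin_mem h i)
    (fun a _ b _ hab => (s.orderEmbOfFin h).injective hab) (fun b hb => ?_) (fun _ _ => rfl)
  have : b ∈ Set.range (s.orderEmbOfFin h) := by
    rw [Finset.range_orderEmbOfFin]; exact_mod_cast hb
  obtain ⟨j, hj⟩ := this
  exact ⟨j, mem_univ _, hj⟩

theorem det_diag_mul_submatrix {p : Type*} {q : Type*} [DecidableEq p] [Fintype p] {k : ℕ}
    (d : p → R) (N : Matrix p q R) (e : Fin k → p) (f : Fin k → q) :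
    ((Matrix.diagonal d * N).submatrix e f).det
      = (∏ i, d (e i)) * (N.submatrix e f).det := by
  have : (Matrix.diagonal d * N).submatrix e f
      = Matrix.diagonal (fun i => d (e i)) * N.submatrix e f := by
    ext i j
    simp [Matrix.diagonal_mul, Matrix.submatrix_apply]
  rw [this, Matrix.det_mul, Matrix.det_diagonal]

end Aux

/-- The weighted principal-minor / Cauchy–Binet expansion: with `X = diag x` and
`Y = diag y`,
`det (t•1 + XBYBᵗ) = Σ_{|I|=|J|} t^(n-|I|) x^I y^J (det B_{I,J})²`.
(Stated for arbitrary weights in an arbitrary commutative ring, which is equivalent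
to the identity of polynomials in indeterminates `x`, `y`.) -/
theorem weighted_charpoly_expansion {n m : ℕ} {R : Type*} [CommRing R]
    (B : Matrix (Fin n) (Fin m) R) (x : Fin n → R) (y : Fin m → R) :
    ((Polynomial.X : R[X]) • (1 : Matrix (Fin n) (Fin n) R[X])
        + (Matrix.diagonal x * B * Matrix.diagonal y * B.transpose).map Polynomial.C).det
    = ∑ I : Finset (Fin n),
        ∑ J ∈ Finset.univ.filter (fun J : Finset (Fin m) => J.card = I.card),
          Polynomial.X ^ (n - I.card)
            * Polynomial.C ((∏ i ∈ I, x i) * (∏ j ∈ J, y j) * (minorDet B I J) ^ 2) := by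
  classical
  set M : Matrix (Fin n) (Fin n) R :=
    Matrix.diagonal x * B * Matrix.diagonal y * B.transpose with hM
  rw [det_smul_one_add]
  refine Fintype.sum_congr _ _ fun I => ?_
  -- compute the principal minor over R[X] as C of the one over R
  have hmap : pMinor (M.map Polynomial.C) I = Polynomial.C (pMinor M I) := by
    rw [pMinor, pMinor, Matrix.submatrix_map]
    exact (RingHom.map_det Polynomial.C _).symm
  rw [hmap]
  set e := I.orderEmbOfFin rfl with he
  -- the principal minor of M over I
  have h1 : pMinor M I = (∏ i ∈ I, x i)
      * ((B.submatrix e id) * ((Matrix.diagonal y * B.transpose).submatrix id e)).det := by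
    rw [pMinor]
    have : M.submatrix e e
        = (Matrix.diagonal x * (B * (Matrix.diagonal y * B.transpose))).submatrix e e := by
      rw [hM, Matrix.mul_assoc, Matrix.mul_assoc]
    rw [this, det_diag_mul_submatrix, prod_orderEmbOfFin]
    congr 2
  rw [h1, cauchyBinet, Finset.mul_sum, map_sum, Finset.mul_sum]
  refine Finset.sum_congr rfl fun J hJ => ?_
  have hJc : J.card = I.card := (Finset.mem_filter.mp hJ).2
  have hcd : cDet (R := R) (B.submatrix e id) J
      = minorDet B I J := by
    rw [cDet, minorDet, dif_pos hJc, dif_pos hJc.symm]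
    rfl
  have hrd : rDet (R := R) ((Matrix.diagonal y * B.transpose).submatrix id e) J
      = (∏ j ∈ J, y j) * minorDet B I J := by
    rw [rDet, dif_pos hJc]
    have : ((Matrix.diagonal y * B.transpose).submatrix id e).submatrix
        (J.orderEmbOfFin hJc) id
        = (Matrix.diagonal y * B.transpose).submatrix (J.orderEmbOfFin hJc) e := rfl
    rw [this, det_diag_mul_submatrix, prod_orderEmbOfFin]
    congr 1
    rw [minorDet, dif_pos hJc.symm]
    rw [show B.transpose.submatrix (J.orderEmbOfFin hJc) e
        = (B.submatrix e (J.orderEmbOfFin hJc)).transpose from rfl, Matrix.det_transpose]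
  rw [hcd, hrd]
  congr 1
  exact congrArg Polynomial.C (by ring)
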